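/- The entropy of the softmax output σ(s·z) is monotone nonincreasing in the scale s on (0, ∞): for 0 < s₁ ≤ s₂, H(σ(s₁·z)) ≥ H(σ(s₂·z)), where H(p) = −∑_c p_c log p_c. -/

import Mathlib

/-- the Shannon entropy of the softmax output `σ (s • z)` is monotone
nonincreasing in the scale `s` on `(0, ∞)`: for `0 < s₁ ≤ s₂`,
`H (σ (s₁ • z)) ≥ H (σ (s₂ • z))`. -/
theorem softmax_entropy_antitone_in_scale
    {C : ℕ} (hC : 0 < C) (z : Fin C → ℝ) (s₁ s₂ : ℝ) (h1 : 0 < s₁) (h2 : s₁ ≤ s₂) :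
    -(∑ c, (Real.exp (s₂ * z c) / ∑ k, Real.exp (s₂ * z k)) *
        Real.log (Real.exp (s₂ * z c) / ∑ k, Real.exp (s₂ * z k))) ≤
      -(∑ c, (Real.exp (s₁ * z c) / ∑ k, Real.exp (s₁ * z k)) *
        Real.log (Real.exp (s₁ * z c) / ∑ k, Real.exp (s₁ * z k))) := by
  have hne : (Finset.univ : Finset (Fin C)).Nonempty := ⟨⟨0, hC⟩, Finset.mem_univ _⟩
  set Z : ℝ → ℝ := fun s => ∑ c, Real.exp (s * z c) with hZdef
  set N : ℝ → ℝ := fun s => ∑ c, Real.exp (s * z c) * z c with hNdef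
  set M : ℝ → ℝ := fun s => ∑ c, Real.exp (s * z c) * z c * z c with hMdef
  have hZpos : ∀ s, 0 < Z s := fun s =>
    Finset.sum_pos (fun c _ => Real.exp_pos _) hne
  have hZne : ∀ s, Z s ≠ 0 := fun s => (hZpos s).ne'
  have hZd : ∀ s, HasDerivAt Z (N s) s := by
    intro s
    exact HasDerivAt.fun_sum fun c _ => (hasDerivAt_mul_const (z c)).exp
  have hNd : ∀ s, HasDerivAt N (M s) s := by
    intro s
    exact HasDerivAt.fun_sum fun c _ => ((hasDerivAt_mul_const (z c)).exp).mul_const (z c)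
  set f : ℝ → ℝ := fun s => Real.log (Z s) - s * (N s / Z s) with hfdef
  have hfd : ∀ s, HasDerivAt f
      (N s / Z s - (1 * (N s / Z s) + s * ((M s * Z s - N s * N s) / Z s ^ 2))) s := by
    intro s
    exact ((hZd s).log (hZne s)).sub ((hasDerivAt_id s).mul ((hNd s).div (hZd s) (hZne s)))
  -- Cauchy–Schwarz: N s ^ 2 ≤ Z s * M s
  have hCS : ∀ s, N s * N s ≤ M s * Z s := by
    intro s
    have := Finset.sum_mul_sq_le_sq_mul_sq Finset.univ
      (fun c => Real.sqrt (Real.exp (s * z c)))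
      (fun c => Real.sqrt (Real.exp (s * z c)) * z c)
    have h1' : ∀ c : Fin C, Real.sqrt (Real.exp (s * z c)) *
        (Real.sqrt (Real.exp (s * z c)) * z c) = Real.exp (s * z c) * z c := by
      intro c
      rw [← mul_assoc, Real.mul_self_sqrt (Real.exp_pos _).le]
    have h2' : ∀ c : Fin C, Real.sqrt (Real.exp (s * z c)) ^ 2 = Real.exp (s * z c) := by
      intro c; rw [Real.sq_sqrt (Real.exp_pos _).le]
    have h3' : ∀ c : Fin C, (Real.sqrt (Real.exp (s * z c)) * z c) ^ 2 =
        Real.exp (s * z c) * z c * z c := by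
      intro c; rw [mul_pow, Real.sq_sqrt (Real.exp_pos _).le]; ring
    simp only [h1', h2', h3'] at this
    calc N s * N s = (N s) ^ 2 := by ring
      _ ≤ Z s * M s := this
      _ = M s * Z s := by ring
  -- derivative of f nonpositive on positive reals
  have hderiv_nonpos : ∀ s, 0 ≤ s → deriv f s ≤ 0 := by
    intro s hs
    rw [(hfd s).deriv]
    have hnum : 0 ≤ M s * Z s - N s * N s := sub_nonneg.2 (hCS s)
    have : 0 ≤ s * ((M s * Z s - N s * N s) / Z s ^ 2) :=
      mul_nonneg hs (div_nonneg hnum (sq_nonneg _))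
    linarith
  -- f is antitone on [s₁, s₂]
  have hdiff : ∀ s, DifferentiableAt ℝ f s := fun s => (hfd s).differentiableAt
  have hanti : AntitoneOn f (Set.Icc s₁ s₂) := by
    apply antitoneOn_of_deriv_nonpos (convex_Icc s₁ s₂)
      (fun s _ => (hdiff s).continuousAt.continuousWithinAt)
      (fun s _ => (hdiff s).differentiableWithinAt)
    intro x hx
    rw [interior_Icc] at hx
    exact hderiv_nonpos x (le_of_lt (lt_of_lt_of_le h1 hx.1.le))
  -- entropy equals f
  have hent : ∀ s : ℝ, -(∑ c, (Real.exp (s * z c) / Z s) *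
      Real.log (Real.exp (s * z c) / Z s)) = f s := by
    intro s
    have hlog : ∀ c : Fin C, Real.log (Real.exp (s * z c) / Z s) =
        s * z c - Real.log (Z s) := by
      intro c
      rw [Real.log_div (Real.exp_ne_zero _) (hZne s), Real.log_exp]
    have : ∑ c, (Real.exp (s * z c) / Z s) * Real.log (Real.exp (s * z c) / Z s)
        = (∑ c, Real.exp (s * z c) * (s * z c)) / Z s - Real.log (Z s) := by
      have hterm : ∀ c : Fin C, (Real.exp (s * z c) / Z s) *
          Real.log (Real.exp (s * z c) / Z s) =
          Real.exp (s * z c) * (s * z c) / Z s -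
          Real.exp (s * z c) / Z s * Real.log (Z s) := by
        intro c; rw [hlog c]; ring
      rw [Finset.sum_congr rfl (fun c _ => hterm c), Finset.sum_sub_distrib,
        ← Finset.sum_div, ← Finset.sum_mul, ← Finset.sum_div]
      have : (∑ c, Real.exp (s * z c)) = Z s := rfl
      rw [this, div_self (hZne s), one_mul]
    rw [this, hfdef]
    have : (∑ c, Real.exp (s * z c) * (s * z c)) = s * N s := by
      rw [hNdef, Finset.mul_sum]
      apply Finset.sum_congr rfl
      intro c _; ring
    rw [this]
    ring
  have key := hanti (Set.left_mem_Icc.2 h2) (Set.right_mem_Icc.2 h2) h2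
  calc -(∑ c, (Real.exp (s₂ * z c) / ∑ k, Real.exp (s₂ * z k)) *
        Real.log (Real.exp (s₂ * z c) / ∑ k, Real.exp (s₂ * z k))) = f s₂ := hent s₂
    _ ≤ f s₁ := key
    _ = -(∑ c, (Real.exp (s₁ * z c) / ∑ k, Real.exp (s₁ * z k)) *
        Real.log (Real.exp (s₁ * z c) / ∑ k, Real.exp (s₁ * z k))) := (hent s₁).symm
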